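/- arXiv:1908.10278 — 2 statements merged into one kernel-verified Lean document; each statement's English description precedes it below -/
import Mathlib

section
/- Let Y₁, …, Yₙ be i.i.d. Poisson random variables with parameter ρ > 0, let ℓ ∈ ℕ with ρ ≤ ℓ/e, and set Y = Σ_{k=1}^n max{Y_k − ℓ, 0}. Then for β = 2n·ρ^ℓ/ℓ!, P(Y > β) < exp(−β/2). -/
open MeasureTheory ProbabilityTheory Real

lemma thinned_tsum_bound (ρ : ℝ) (ℓ : ℕ) (hρ : 0 < ρ) (hρℓ : ρ ≤ (ℓ : ℝ) / Real.exp 1) :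
    ∑' j : ℕ, ENNReal.ofReal
        (Real.exp ((j - ℓ : ℕ) : ℝ) * (Real.exp (-ρ) * (ρ ^ j / (j.factorial : ℝ))))
      ≤ ENNReal.ofReal (1 + ρ ^ ℓ / (ℓ.factorial : ℝ)) := by
  classical
  set c : ℝ := ρ ^ ℓ / (ℓ.factorial : ℝ) with hc
  have hfacpos : (0:ℝ) < (ℓ.factorial : ℝ) := by exact_mod_cast ℓ.factorial_pos
  have hc_pos : 0 < c := div_pos (pow_pos hρ ℓ) hfacpos
  set q : ℝ := Real.exp 1 * ρ / ((ℓ : ℝ) + 1) with hq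
  have heρ : Real.exp 1 * ρ ≤ (ℓ : ℝ) := by
    rw [mul_comm]
    exact (le_div_iff₀ (Real.exp_pos 1)).mp hρℓ
  have hℓ1 : (0:ℝ) < (ℓ : ℝ) + 1 := by positivity
  have hq_pos : 0 < q := by positivity
  have hq_lt1 : q < 1 := by
    rw [hq, div_lt_one hℓ1]; linarith
  set p : ℕ → ℝ := fun j => Real.exp (-ρ) * (ρ ^ j / (j.factorial : ℝ)) with hp
  set F : ℕ → ℝ := fun j => if ℓ < j then c * Real.exp (-ρ) * q ^ (j - ℓ) else 0 with hF
  have hp_nonneg : ∀ j, 0 ≤ p j := fun j => by positivity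
  have hF_nonneg : ∀ j, 0 ≤ F j := by
    intro j; rw [hF]; dsimp only; split
    · positivity
    · exact le_rfl
  -- termwise bound
  have hterm : ∀ j : ℕ, Real.exp ((j - ℓ : ℕ) : ℝ) * p j ≤ p j + F j := by
    intro j
    by_cases hj : j ≤ ℓ
    · have h0 : j - ℓ = 0 := Nat.sub_eq_zero_of_le hj
      have hFj : F j = 0 := by rw [hF]; simp [Nat.not_lt.mpr hj]
      rw [h0, hFj]; simp
    · push_neg at hj
      set m : ℕ := j - ℓ with hm
      have hjm : j = ℓ + m := by omega
      have hFj : F j = c * Real.exp (-ρ) * q ^ m := by rw [hF]; simp [hj, hm]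
      have hexp : Real.exp ((m : ℕ) : ℝ) = Real.exp 1 ^ m := by
        rw [← Real.exp_nat_mul, mul_one]
      have hfac : (ℓ.factorial : ℝ) * ((ℓ : ℝ) + 1) ^ m ≤ ((ℓ + m).factorial : ℝ) := by
        have := Nat.factorial_mul_pow_le_factorial (m := ℓ) (n := m)
        exact_mod_cast this
      have hmain : Real.exp ((m : ℕ) : ℝ) * p j ≤ F j := by
        rw [hFj, hexp, hp, hjm]
        dsimp only
        have hfacj : (0:ℝ) < ((ℓ + m).factorial : ℝ) := by exact_mod_cast (ℓ + m).factorial_pos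
        calc Real.exp 1 ^ m * (Real.exp (-ρ) * (ρ ^ (ℓ + m) / ((ℓ + m).factorial : ℝ)))
            = (Real.exp (-ρ) * (ρ ^ ℓ * (Real.exp 1 * ρ) ^ m)) / ((ℓ + m).factorial : ℝ) := by
              rw [pow_add, mul_pow]; ring
          _ ≤ (Real.exp (-ρ) * (ρ ^ ℓ * (Real.exp 1 * ρ) ^ m)) /
                ((ℓ.factorial : ℝ) * ((ℓ : ℝ) + 1) ^ m) := by
              gcongr <;> first | positivity | exact hfac
          _ = c * Real.exp (-ρ) * q ^ m := by
              rw [hc, hq, div_pow]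
              field_simp
      calc Real.exp ((m : ℕ) : ℝ) * p j ≤ F j := hmain
        _ ≤ p j + F j := le_add_of_nonneg_left (hp_nonneg j)
  -- sum bound
  show ∑' j : ℕ, ENNReal.ofReal (Real.exp ((j - ℓ : ℕ) : ℝ) * p j) ≤ ENNReal.ofReal (1 + c)
  calc ∑' j : ℕ, ENNReal.ofReal (Real.exp ((j - ℓ : ℕ) : ℝ) * p j)
      ≤ ∑' j : ℕ, (ENNReal.ofReal (p j) + ENNReal.ofReal (F j)) := by
        refine ENNReal.tsum_le_tsum fun j => ?_
        exact (ENNReal.ofReal_le_ofReal (hterm j)).trans (ENNReal.ofReal_add_le)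
    _ = (∑' j : ℕ, ENNReal.ofReal (p j)) + ∑' j : ℕ, ENNReal.ofReal (F j) :=
        ENNReal.tsum_add
    _ ≤ ENNReal.ofReal 1 + ENNReal.ofReal c := by
        gcongr
        · -- sum of Poisson pmf = 1
          have hsum : Summable p := (Real.summable_pow_div_factorial ρ).mul_left _
          rw [← ENNReal.ofReal_tsum_of_nonneg hp_nonneg hsum]
          apply ENNReal.ofReal_le_ofReal
          rw [hp, tsum_mul_left]
          have : ∑' j : ℕ, ρ ^ j / (j.factorial : ℝ) = Real.exp ρ := by
            rw [Real.exp_eq_exp_ℝ]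
            exact (NormedSpace.expSeries_div_hasSum_exp ρ).tsum_eq
          rw [this, Real.exp_neg, inv_mul_cancel₀ (Real.exp_ne_zero ρ)]
        · -- geometric tail sum ≤ c
          have hinj : Function.Injective (fun m : ℕ => ℓ + 1 + m) := fun a b h => by simpa using h
          have hsupp : Function.support (fun j => ENNReal.ofReal (F j)) ⊆
              Set.range (fun m : ℕ => ℓ + 1 + m) := by
            intro j hjne
            by_contra hnot
            have hjle : j ≤ ℓ := by
              by_contra hlt
              exact hnot ⟨j - ℓ - 1, show ℓ + 1 + (j - ℓ - 1) = j by omega⟩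
            have : F j = 0 := by rw [hF]; simp [Nat.not_lt.mpr hjle]
            simp [Function.mem_support, this] at hjne
          have hshift : ∑' j : ℕ, ENNReal.ofReal (F j)
              = ∑' m : ℕ, ENNReal.ofReal (F (ℓ + 1 + m)) :=
            (Function.Injective.tsum_eq hinj hsupp).symm
          have hFv : ∀ m : ℕ, F (ℓ + 1 + m)
              = (c * Real.exp (-ρ) * q) * q ^ m := by
            intro m
            have h1 : ℓ < ℓ + 1 + m := by omega
            have h2 : ℓ + 1 + m - ℓ = m + 1 := by omega
            rw [hF]; simp only [h1, if_true, h2]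
            rw [pow_succ]; ring
          rw [hshift]
          have : ∀ m : ℕ, ENNReal.ofReal (F (ℓ + 1 + m))
              = ENNReal.ofReal (c * Real.exp (-ρ) * q) * (ENNReal.ofReal q) ^ m := by
            intro m
            rw [hFv m, ENNReal.ofReal_mul (by positivity), ENNReal.ofReal_pow hq_pos.le]
          simp_rw [this]
          rw [ENNReal.tsum_mul_left, ENNReal.tsum_geometric]
          have hgeom : (1 - ENNReal.ofReal q)⁻¹ = ENNReal.ofReal ((1 - q)⁻¹) := by
            rw [← ENNReal.ofReal_one, ← ENNReal.ofReal_sub _ hq_pos.le,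
              ENNReal.ofReal_inv_of_pos (by linarith)]
          rw [hgeom, ← ENNReal.ofReal_mul (by positivity)]
          apply ENNReal.ofReal_le_ofReal
          -- real inequality: c * exp(-ρ) * q * (1-q)⁻¹ ≤ c
          have h1q : (0:ℝ) < 1 - q := by linarith
          have hkey : Real.exp 1 * ρ * Real.exp (-ρ) ≤ 1 := by
            have h := Real.add_one_le_exp (ρ - 1)
            have h2 : ρ ≤ Real.exp (ρ - 1) := by linarith
            calc Real.exp 1 * ρ * Real.exp (-ρ)
                ≤ Real.exp 1 * Real.exp (ρ - 1) * Real.exp (-ρ) := by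
                  nlinarith [mul_nonneg (mul_nonneg (Real.exp_pos 1).le
                    (Real.exp_pos (-ρ)).le) (sub_nonneg.mpr h2)]
              _ = 1 := by rw [← Real.exp_add, ← Real.exp_add]; norm_num
          have hq' : q * ((ℓ:ℝ) + 1) = Real.exp 1 * ρ := by
            rw [hq]; field_simp
          have hq1 : Real.exp (-ρ) * q ≤ 1 - q := by
            have h3 : Real.exp (-ρ) * (q * ((ℓ:ℝ) + 1)) = Real.exp 1 * ρ * Real.exp (-ρ) := by
              rw [hq']; ring
            nlinarith [Real.exp_pos (-ρ)]
          have hre : c * Real.exp (-ρ) * q * (1 - q)⁻¹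
              = c * ((Real.exp (-ρ) * q) * (1 - q)⁻¹) := by ring
          rw [hre]
          have hle1 : (Real.exp (-ρ) * q) * (1 - q)⁻¹ ≤ 1 := by
            rw [← div_eq_mul_inv, div_le_one h1q]; exact hq1
          have := mul_le_of_le_one_right hc_pos.le hle1
          linarith
    _ = ENNReal.ofReal (1 + c) := (ENNReal.ofReal_add zero_le_one hc_pos.le).symm

/-- If `Y₁,…,Yₙ` are i.i.d. Poisson(ρ) with `0 < ρ ≤ ℓ/e`, and
`Y = Σ_k max{Y_k - ℓ, 0}`, then with `β = 2n ρ^ℓ/ℓ!` we have `P(Y > β) < exp(-β/2)`. -/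
theorem thinned_overflow_bound
    {Ω : Type*} [MeasurableSpace Ω] (μ : Measure Ω) [IsProbabilityMeasure μ]
    (n : ℕ) (ρ : ℝ) (ℓ : ℕ) (hρ : 0 < ρ) (hρℓ : ρ ≤ (ℓ : ℝ) / Real.exp 1)
    (Y : Fin n → Ω → ℕ)
    (hmeas : ∀ i, Measurable (Y i))
    (hindep : iIndepFun Y μ)
    (hdist : ∀ i, ∀ j : ℕ,
      μ {ω | Y i ω = j} = ENNReal.ofReal (Real.exp (-ρ) * ρ ^ j / (j.factorial : ℝ))) :
    μ {ω | 2 * (n : ℝ) * ρ ^ ℓ / (ℓ.factorial : ℝ)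
            < ∑ i, ((Y i ω - ℓ : ℕ) : ℝ)}
      < ENNReal.ofReal (Real.exp (-(2 * (n : ℝ) * ρ ^ ℓ / (ℓ.factorial : ℝ)) / 2)) := by
  classical
  have hfacpos : (0:ℝ) < (ℓ.factorial : ℝ) := by exact_mod_cast ℓ.factorial_pos
  set c : ℝ := ρ ^ ℓ / (ℓ.factorial : ℝ) with hc
  have hc_pos : 0 < c := div_pos (pow_pos hρ ℓ) hfacpos
  set β : ℝ := 2 * (n : ℝ) * ρ ^ ℓ / (ℓ.factorial : ℝ) with hβ
  have hβc : β = 2 * n * c := by rw [hβ, hc]; ring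
  rcases Nat.eq_zero_or_pos n with hn | hn
  · subst hn
    have hset : {ω : Ω | β < ∑ i : Fin 0, ((Y i ω - ℓ : ℕ) : ℝ)} = ∅ := by
      ext ω
      simp only [Finset.univ_eq_empty, Finset.sum_empty, Set.mem_setOf_eq,
        Set.mem_empty_iff_false, iff_false, not_lt]
      rw [hβc]; norm_num
    rw [hset]
    simp only [measure_empty]
    exact ENNReal.ofReal_pos.mpr (Real.exp_pos _)
  -- main case n ≥ 1
  set X : Fin n → Ω → ℝ := fun i ω => ((Y i ω - ℓ : ℕ) : ℝ) with hX
  have hXmeas : ∀ i, Measurable (X i) := fun i =>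
    (measurable_from_top (f := fun j : ℕ => ((j - ℓ : ℕ) : ℝ))).comp (hmeas i)
  have hXindep : iIndepFun X μ :=
    hindep.comp (fun _ j => ((j - ℓ : ℕ) : ℝ)) (fun _ => measurable_from_top)
  -- lintegral bound
  have key : ∀ i, ∫⁻ ω, ENNReal.ofReal (Real.exp (X i ω)) ∂μ ≤ ENNReal.ofReal (1 + c) := by
    intro i
    have hg : Measurable (fun j : ℕ => ENNReal.ofReal (Real.exp ((j - ℓ : ℕ) : ℝ))) :=
      measurable_from_top
    have h1 : ∫⁻ ω, ENNReal.ofReal (Real.exp (X i ω)) ∂μ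
        = ∑' j : ℕ, ENNReal.ofReal (Real.exp ((j - ℓ : ℕ) : ℝ)) * μ {ω | Y i ω = j} := by
      have : ∫⁻ ω, ENNReal.ofReal (Real.exp (X i ω)) ∂μ
          = ∫⁻ j, ENNReal.ofReal (Real.exp ((j - ℓ : ℕ) : ℝ)) ∂(μ.map (Y i)) :=
        (lintegral_map hg (hmeas i)).symm
      rw [this, lintegral_countable']
      congr 1
      ext j
      rw [Measure.map_apply (hmeas i) (measurableSet_singleton j)]
      rfl
    rw [h1]
    calc ∑' j : ℕ, ENNReal.ofReal (Real.exp ((j - ℓ : ℕ) : ℝ)) * μ {ω | Y i ω = j}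
        = ∑' j : ℕ, ENNReal.ofReal
            (Real.exp ((j - ℓ : ℕ) : ℝ) * (Real.exp (-ρ) * (ρ ^ j / (j.factorial : ℝ)))) := by
          congr 1; ext j
          rw [hdist i j, ← ENNReal.ofReal_mul (Real.exp_nonneg _)]
          congr 1
          ring
      _ ≤ ENNReal.ofReal (1 + c) := thinned_tsum_bound ρ ℓ hρ hρℓ
  -- integrability
  have hint : ∀ i, Integrable (fun ω => Real.exp (1 * X i ω)) μ := by
    intro i
    simp only [one_mul]
    refine ⟨((hXmeas i).exp).aestronglyMeasurable, ?_⟩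
    rw [hasFiniteIntegral_iff_norm]
    have : ∀ ω, ENNReal.ofReal ‖Real.exp (X i ω)‖ = ENNReal.ofReal (Real.exp (X i ω)) := by
      intro ω; rw [Real.norm_eq_abs, abs_of_pos (Real.exp_pos _)]
    simp_rw [this]
    exact lt_of_le_of_lt (key i) ENNReal.ofReal_lt_top
  -- mgf bound
  have hmgf : ∀ i, mgf (X i) μ 1 ≤ 1 + c := by
    intro i
    rw [mgf]
    rw [integral_eq_lintegral_of_nonneg_ae
      (Filter.Eventually.of_forall fun ω => (Real.exp_pos _).le)
      ((hXmeas i).const_mul 1).exp.aestronglyMeasurable]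
    simp_rw [one_mul]
    calc (∫⁻ ω, ENNReal.ofReal (Real.exp (X i ω)) ∂μ).toReal
        ≤ (ENNReal.ofReal (1 + c)).toReal :=
          ENNReal.toReal_mono ENNReal.ofReal_ne_top (key i)
      _ = 1 + c := ENNReal.toReal_ofReal (by positivity)
  -- Chernoff
  have hsumint : Integrable (fun ω => Real.exp (1 * (∑ i, X i) ω)) μ :=
    hXindep.integrable_exp_mul_sum hXmeas (fun i _ => hint i)
  have hchern := measure_ge_le_exp_mul_mgf (X := ∑ i, X i) (μ := μ) β
    (by norm_num : (0:ℝ) ≤ 1) hsumint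
  have hmgf_sum : mgf (∑ i, X i) μ 1 = ∏ i, mgf (X i) μ 1 :=
    hXindep.mgf_sum hXmeas Finset.univ
  have hprod : ∏ i, mgf (X i) μ 1 ≤ (1 + c) ^ n := by
    calc ∏ i, mgf (X i) μ 1 ≤ ∏ _i : Fin n, (1 + c) :=
        Finset.prod_le_prod (fun i _ => mgf_nonneg) (fun i _ => hmgf i)
      _ = (1 + c) ^ n := by rw [Finset.prod_const, Finset.card_univ, Fintype.card_fin]
  have hpow : (1 + c) ^ n < Real.exp (β / 2) := by
    have h1 : (1 + c) < Real.exp c := by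
      have := Real.add_one_lt_exp hc_pos.ne'
      linarith
    have h2 : (1 + c) ^ n < Real.exp c ^ n :=
      pow_lt_pow_left₀ h1 (by positivity) hn.ne'
    have h3 : Real.exp c ^ n = Real.exp (β / 2) := by
      rw [← Real.exp_nat_mul, hβc]
      congr 1
      ring
    rwa [h3] at h2
  -- conclusion
  have hsub : {ω | β < ∑ i, ((Y i ω - ℓ : ℕ) : ℝ)} ⊆ {ω | β ≤ (∑ i, X i) ω} := by
    intro ω hω
    simp only [Set.mem_setOf_eq, Finset.sum_apply] at *
    exact le_of_lt hω
  have hfin : μ {ω | β < ∑ i, ((Y i ω - ℓ : ℕ) : ℝ)} ≠ ⊤ := measure_ne_top μ _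
  rw [ENNReal.lt_ofReal_iff_toReal_lt hfin]
  calc (μ {ω | β < ∑ i, ((Y i ω - ℓ : ℕ) : ℝ)}).toReal
      ≤ (μ {ω | β ≤ (∑ i, X i) ω}).toReal :=
        ENNReal.toReal_mono (measure_ne_top μ _) (measure_mono hsub)
    _ ≤ Real.exp (-1 * β) * mgf (∑ i, X i) μ 1 := hchern
    _ ≤ Real.exp (-1 * β) * (1 + c) ^ n := by
        have := hmgf_sum ▸ hprod
        nlinarith [Real.exp_pos (-1 * β), this]
    _ < Real.exp (-1 * β) * Real.exp (β / 2) := by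
        have := Real.exp_pos (-1 * β)
        nlinarith [hpow]
    _ = Real.exp (-β / 2) := by rw [← Real.exp_add]; congr 1; ring
end

section
/- Define real sequences θ₁ = ρ/s₁ and, for i ≥ 1, γ_i = n·∏_{j=1}^i (θ_j/(4e))^{k_j} and θ_{i+1} = (1/s_{i+1})·∏_{j=1}^i (θ_j/(4e))^{k_j}, where s_{i+1} < dℓ for all i, the k_j are positive integers, and 0 < ρ, with ρ̃ = min{1, ρ}. Then for all i ≥ 1, θ_{i+1}/(4e) > (ρ̃/(4edℓ))^{∏_{j=1}^i (k_j+1)} and γ_i > n·(ρ̃/(4edℓ))^{∏_{j=1}^i (k_j+2)}. -/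
open Real Finset

/-- Inductive lower bounds on the sequences `θ_i` and `γ_i` from the lower-bound proof:
with `θ₁ = ρ/s₁`, `γ_i = n·∏_{j=1}^i (θ_j/(4e))^{k_j}`,
`θ_{i+1} = (1/s_{i+1})·∏_{j=1}^i (θ_j/(4e))^{k_j}`, `0 < s_j < dℓ`, `k_j ≥ 1`, `ρ̃ = min 1 ρ`,
we have `θ_{i+1}/(4e) > (ρ̃/(4edℓ))^{∏_{j=1}^i (k_j+1)}` and
`γ_i > n·(ρ̃/(4edℓ))^{∏_{j=1}^i (k_j+2)}` for all `i ≥ 1`. -/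
theorem theta_gamma_lower_bounds (d ℓ n : ℕ) (hd : 1 ≤ d) (hℓ : 1 ≤ ℓ) (hn : 1 ≤ n)
    (ρ : ℝ) (hρ : 0 < ρ) (s : ℕ → ℝ) (hs : ∀ j, 0 < s j ∧ s j < (d : ℝ) * ℓ)
    (k : ℕ → ℕ) (hk : ∀ j, 1 ≤ k j)
    (θ : ℕ → ℝ) (hθ1 : θ 1 = ρ / s 1)
    (hθ : ∀ i, 1 ≤ i →
      θ (i + 1) = (1 / s (i + 1)) * ∏ j ∈ Finset.Icc 1 i, (θ j / (4 * Real.exp 1)) ^ (k j))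
    (γ : ℕ → ℝ)
    (hγ : ∀ i, 1 ≤ i →
      γ i = (n : ℝ) * ∏ j ∈ Finset.Icc 1 i, (θ j / (4 * Real.exp 1)) ^ (k j)) :
    ∀ i, 1 ≤ i →
      (min 1 ρ / (4 * Real.exp 1 * d * ℓ)) ^ (∏ j ∈ Finset.Icc 1 i, (k j + 1))
          < θ (i + 1) / (4 * Real.exp 1) ∧
        (n : ℝ) * (min 1 ρ / (4 * Real.exp 1 * d * ℓ)) ^ (∏ j ∈ Finset.Icc 1 i, (k j + 2))
          < γ i := by
  have he2 : (2:ℝ) ≤ Real.exp 1 := by nlinarith [Real.add_one_le_exp 1]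
  have hepos : (0:ℝ) < 4 * Real.exp 1 := by nlinarith
  have hD1 : (1:ℝ) ≤ (d:ℝ) * ℓ := by
    have h1 : (1:ℝ) ≤ (d:ℝ) := by exact_mod_cast hd
    have h2 : (1:ℝ) ≤ (ℓ:ℝ) := by exact_mod_cast hℓ
    nlinarith
  have hden : (0:ℝ) < 4 * Real.exp 1 * d * ℓ := by nlinarith
  set B : ℝ := min 1 ρ / (4 * Real.exp 1 * d * ℓ) with hBdef
  have hmin : 0 < min 1 ρ := lt_min one_pos hρ
  have hmin1 : min 1 ρ ≤ 1 := min_le_left 1 ρ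
  have hBpos : 0 < B := div_pos hmin hden
  have hB1 : B < 1 := by
    rw [hBdef, div_lt_one hden]; nlinarith
  have hBval : B * (4 * Real.exp 1 * d * ℓ) = min 1 ρ := div_mul_cancel₀ _ hden.ne'
  -- positivity of θ
  have hθpos : ∀ i, 1 ≤ i → 0 < θ i := by
    intro i
    induction i using Nat.strong_induction_on with
    | _ i ih =>
      intro hi
      rcases Nat.exists_eq_add_of_le hi with ⟨m, rfl⟩
      cases m with
      | zero => rw [hθ1]; exact div_pos hρ (hs 1).1
      | succ m =>
        have h1m : 1 ≤ m + 1 := Nat.succ_le_succ (Nat.zero_le m)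
        have heq := hθ (m + 1) h1m
        have hre : 1 + (m + 1) = (m + 1) + 1 := by ring
        rw [hre, heq]
        apply mul_pos (one_div_pos.mpr (hs (m + 1 + 1)).1)
        apply Finset.prod_pos
        intro j hj
        rw [Finset.mem_Icc] at hj
        exact pow_pos (div_pos (ih j (by omega) hj.1) hepos) _
  have hPpos : ∀ i, 0 < ∏ j ∈ Finset.Icc 1 i, (θ j / (4 * Real.exp 1)) ^ (k j) := by
    intro i
    apply Finset.prod_pos
    intro j hj
    rw [Finset.mem_Icc] at hj
    exact pow_pos (div_pos (hθpos j hj.1) hepos) _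
  -- B * P_i ≤ θ (i+1) / (4e)
  have hBθ : ∀ i, 1 ≤ i →
      B * (∏ j ∈ Finset.Icc 1 i, (θ j / (4 * Real.exp 1)) ^ (k j)) ≤ θ (i + 1) / (4 * Real.exp 1) := by
    intro i hi
    rw [hθ i hi]
    have hP := hPpos i
    have hsi := hs (i + 1)
    have hkey : (1 / s (i + 1)) * (∏ j ∈ Finset.Icc 1 i, (θ j / (4 * Real.exp 1)) ^ (k j)) / (4 * Real.exp 1)
        = (1 / (4 * Real.exp 1 * s (i + 1))) * (∏ j ∈ Finset.Icc 1 i, (θ j / (4 * Real.exp 1)) ^ (k j)) := by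
      field_simp
    rw [hkey]
    apply mul_le_mul_of_nonneg_right _ hP.le
    rw [le_div_iff₀ (by nlinarith [hsi.1] : (0:ℝ) < 4 * Real.exp 1 * s (i + 1))]
    -- B * (4e * s (i+1)) ≤ 1
    nlinarith [mul_le_mul_of_nonneg_left hsi.2.le (mul_nonneg hBpos.le hepos.le), hBval, hmin1]
  -- main induction
  have main : ∀ i, 1 ≤ i →
      B ^ (∏ j ∈ Finset.Icc 1 i, (k j + 1))
        < B * ∏ j ∈ Finset.Icc 1 i, (θ j / (4 * Real.exp 1)) ^ (k j) := by
    intro i hi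
    induction i, hi using Nat.le_induction with
    | base =>
      simp only [Finset.Icc_self, Finset.prod_singleton]
      have hθ1B : B < θ 1 / (4 * Real.exp 1) := by
        rw [hθ1, hBdef]
        rw [div_div, div_lt_div_iff₀ hden (by nlinarith [(hs 1).1])]
        nlinarith [mul_nonneg (sub_nonneg.mpr (min_le_right 1 ρ)) (mul_nonneg (hs 1).1.le hepos.le), mul_pos (mul_pos hρ hepos) (sub_pos.mpr (hs 1).2)]
      have hp : B ^ (k 1) < (θ 1 / (4 * Real.exp 1)) ^ (k 1) :=
        pow_lt_pow_left₀ hθ1B hBpos.le (Nat.one_le_iff_ne_zero.mp (hk 1))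
      calc B ^ (k 1 + 1) = B * B ^ (k 1) := by ring
      _ < B * (θ 1 / (4 * Real.exp 1)) ^ (k 1) := by
          exact mul_lt_mul_of_pos_left hp hBpos
    | succ i hi ih =>
      rw [Finset.prod_Icc_succ_top (by omega : 1 ≤ i + 1),
        Finset.prod_Icc_succ_top (by omega : 1 ≤ i + 1)]
      have hstep : B ^ (∏ j ∈ Finset.Icc 1 i, (k j + 1)) < θ (i + 1) / (4 * Real.exp 1) :=
        lt_of_lt_of_le ih (hBθ i hi)
      have hpow : (B ^ (∏ j ∈ Finset.Icc 1 i, (k j + 1))) ^ (k (i + 1))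
          < (θ (i + 1) / (4 * Real.exp 1)) ^ (k (i + 1)) :=
        pow_lt_pow_left₀ hstep (pow_nonneg hBpos.le _) (Nat.one_le_iff_ne_zero.mp (hk (i + 1)))
      calc B ^ ((∏ j ∈ Finset.Icc 1 i, (k j + 1)) * (k (i + 1) + 1))
          = B ^ (∏ j ∈ Finset.Icc 1 i, (k j + 1))
            * (B ^ (∏ j ∈ Finset.Icc 1 i, (k j + 1))) ^ (k (i + 1)) := by
            rw [pow_mul, pow_succ]; ring
        _ < (B * ∏ j ∈ Finset.Icc 1 i, (θ j / (4 * Real.exp 1)) ^ (k j))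
            * (θ (i + 1) / (4 * Real.exp 1)) ^ (k (i + 1)) :=
            mul_lt_mul'' ih hpow (pow_nonneg hBpos.le _)
              (pow_nonneg (pow_nonneg hBpos.le _) _)
        _ = B * ((∏ j ∈ Finset.Icc 1 i, (θ j / (4 * Real.exp 1)) ^ (k j))
            * (θ (i + 1) / (4 * Real.exp 1)) ^ (k (i + 1))) := by ring
  -- conclusions
  intro i hi
  have hmi := main i hi
  constructor
  · exact lt_of_lt_of_le hmi (hBθ i hi)
  · rw [hγ i hi]
    have hQR : (∏ j ∈ Finset.Icc 1 i, (k j + 1)) ≤ (∏ j ∈ Finset.Icc 1 i, (k j + 2)) + 1 := by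
      have : (∏ j ∈ Finset.Icc 1 i, (k j + 1)) ≤ (∏ j ∈ Finset.Icc 1 i, (k j + 2)) :=
        Finset.prod_le_prod' fun j _ => by omega
      omega
    have h1 : B ^ ((∏ j ∈ Finset.Icc 1 i, (k j + 2)) + 1)
        ≤ B ^ (∏ j ∈ Finset.Icc 1 i, (k j + 1)) :=
      pow_le_pow_of_le_one hBpos.le hB1.le hQR
    have h2 : B * B ^ (∏ j ∈ Finset.Icc 1 i, (k j + 2))
        < B * ∏ j ∈ Finset.Icc 1 i, (θ j / (4 * Real.exp 1)) ^ (k j) := by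
      calc B * B ^ (∏ j ∈ Finset.Icc 1 i, (k j + 2))
          = B ^ ((∏ j ∈ Finset.Icc 1 i, (k j + 2)) + 1) := by rw [pow_succ]; ring
        _ ≤ B ^ (∏ j ∈ Finset.Icc 1 i, (k j + 1)) := h1
        _ < _ := hmi
    have h3 : B ^ (∏ j ∈ Finset.Icc 1 i, (k j + 2))
        < ∏ j ∈ Finset.Icc 1 i, (θ j / (4 * Real.exp 1)) ^ (k j) :=
      lt_of_mul_lt_mul_left h2 hBpos.le
    have hn' : (0:ℝ) < n := by exact_mod_cast Nat.lt_of_lt_of_le Nat.zero_lt_one hn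
    exact mul_lt_mul_of_pos_left h3 hn'
end
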